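/- (Corollary 5.7, integrated inverse-weight bound) Fix d ≥ 3, β ∈ (0, 1 − 2/d), an integer L ≥ 2, x ∈ Λ, and ξ' ∈ {0,1}. Then ∫_{−L^β/4}^{L^β/4} ds ∫_{Λ*} dk 1/Φ^d(R̃_s^{ξ'}(k), x) ≤ c₆ Π_{j=1}^d ⟨x_j⟩^{1/6}, where c₆ := inf{ c_{β',6} : 0 < β' < 1 − 2/d } and c_{β',6} := 2 + 2^{d(1−β')/2+1}(1 + 2/(πβ'))^d · 2/(d(1−β') − 2). -/

import Mathlib

noncomputable section

namespace KWP

open MeasureTheory Classical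

/-- regularized absolute value `⟨r⟩ = √(1+r²)` -/
def reg (r : ℝ) : ℝ := Real.sqrt (1 + r^2)

/-- `e^{2πi t}` -/
def eTwoPiI (t : ℝ) : ℂ := Complex.exp (2*Real.pi*Complex.I*(t:ℂ))

/-- one-dimensional centered periodic lattice of side `L`: representatives in `(-L/2, L/2]` -/
def Lambda1 (L : ℕ) : Finset ℤ :=
  (Finset.Icc (-(L:ℤ)) (L:ℤ)).filter (fun x => -(L:ℤ) < 2*x ∧ 2*x ≤ (L:ℤ))

/-- the lattice `Λ = Λ₁^d` -/
def LambdaSet (L d : ℕ) : Finset (Fin d → ℤ) :=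
  Fintype.piFinset (fun _ => Lambda1 L)

/-- centered representative of `z` modulo `L` -/
def cmod (L : ℕ) (z : ℤ) : ℤ :=
  if 2*(z % (L:ℤ)) ≤ (L:ℤ) then z % (L:ℤ) else z % (L:ℤ) - (L:ℤ)

/-- componentwise centered representative modulo `Λ` -/
def cmodVec (L : ℕ) {d : ℕ} (z : Fin d → ℤ) : Fin d → ℤ := fun i => cmod L (z i)

/-- dual lattice point `m/L ∈ Λ*` associated to `m ∈ Λ` -/
def dpt (L : ℕ) {d : ℕ} (m : Fin d → ℤ) : Fin d → ℝ := fun i => (m i : ℝ) / (L:ℝ)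

/-- membership in the dual lattice `Λ*` -/
def memDual (L d : ℕ) (k : Fin d → ℝ) : Prop := ∃ m ∈ LambdaSet L d, k = dpt L m

/-- normalized sum over the dual lattice, `∫_{Λ*} dk f(k)` (ℂ-valued) -/
def dInt (L d : ℕ) (f : (Fin d → ℝ) → ℂ) : ℂ :=
  ((L:ℂ)^d)⁻¹ * ∑ m ∈ LambdaSet L d, f (dpt L m)

/-- normalized sum over the dual lattice, `∫_{Λ*} dk f(k)` (ℝ-valued) -/
def dIntR (L d : ℕ) (f : (Fin d → ℝ) → ℝ) : ℝ :=
  ((L:ℝ)^d)⁻¹ * ∑ m ∈ LambdaSet L d, f (dpt L m)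

/-- `k · y` for `k ∈ ℝ^d`, `y ∈ ℤ^d` -/
def dotIZ {d : ℕ} (k : Fin d → ℝ) (y : Fin d → ℤ) : ℝ := ∑ i, k i * (y i : ℝ)

def aL (L : ℕ) (β : ℝ) : ℝ := (3/2) * (L:ℝ)^β

def bL (L : ℕ) (β : ℝ) : ℝ := max (2*(L:ℝ)^β) ((L:ℝ)/8)

def gammaFn (L : ℕ) (β : ℝ) (r : ℝ) : ℝ :=
  if |r| ≤ aL L β then 0
  else if bL L β ≤ |r| then 1/3
  else (1/3)*(|r| - aL L β)/(bL L β - aL L β)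

def varphiFn (L : ℕ) (β : ℝ) (r : ℝ) : ℝ :=
  if |r| ≤ (L:ℝ)^β then reg r ^ ((1:ℝ)/2)
  else reg ((L:ℝ)^β) ^ ((1:ℝ)/2) / reg (|r| - (L:ℝ)^β) ^ (β/2)

/-- the one-dimensional weight `Φ` -/
def Phi (L : ℕ) (β : ℝ) (R₁ : ℝ) (x₁ : ℤ) : ℝ :=
  reg (x₁:ℝ) ^ ((1:ℝ)/3 - gammaFn L β R₁) * max 1 (varphiFn L β R₁ / reg (x₁:ℝ) ^ ((1:ℝ)/2))

/-- the weight `Φ^d(R,x) = Π_j Φ(R_j,x_j)` -/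
def Phid (L d : ℕ) (β : ℝ) (R : Fin d → ℝ) (x : Fin d → ℤ) : ℝ := ∏ i, Phi L β (R i) (x i)

/-- `z₀(k) = 1 - e^{-2πik}`, `z₁(k) = 1 + e^{-2πik}` -/
def zfn (ξ : ℕ) (k : ℝ) : ℂ :=
  if ξ = 0 then 1 - Complex.exp (-(2*Real.pi*Complex.I)*(k:ℂ))
  else 1 + Complex.exp (-(2*Real.pi*Complex.I)*(k:ℂ))

/-- `R̃_s^{ξ'}(R,u,k',k)_ℓ = |R_ℓ e^{2πi(u-k')_ℓ} + s z_{ξ'}(k_ℓ)|` -/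
def Rtilde (ξ : ℕ) (s : ℝ) {d : ℕ} (R u k' k : Fin d → ℝ) : Fin d → ℝ :=
  fun ℓ => ‖(R ℓ : ℂ) * eTwoPiI (u ℓ - k' ℓ) + (s:ℂ) * zfn ξ (k ℓ)‖

/-- `R̃_s^{ξ'}(k)_ℓ = |s||z_{ξ'}(k_ℓ)|` -/
def RtildeS (ξ : ℕ) (s : ℝ) {d : ℕ} (k : Fin d → ℝ) : Fin d → ℝ :=
  fun ℓ => |s| * ‖zfn ξ (k ℓ)‖

def c9 (β : ℝ) : ℝ := (2:ℝ)^((7:ℝ)/6) * Real.sqrt 3 * reg ((16:ℝ)^(1/(1-β))/2) ^ ((1:ℝ)/3)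

def c7 (d : ℕ) (β : ℝ) : ℝ :=
  (1/4) * (c9 β * Real.sqrt Real.pi * Real.Gamma ((d:ℝ)*(1-β)/4 - 1/2) / Real.Gamma ((d:ℝ)*(1-β)/4))^d

def c8 (d : ℕ) (β : ℝ) : ℝ :=
  max (2*(d:ℝ)*(c9 β)^d) (2 * c7 d β * ((1 - 1/(d:ℝ))^d)⁻¹)

def c6b (d : ℕ) (β : ℝ) : ℝ :=
  2 + (2:ℝ)^((d:ℝ)*(1-β)/2 + 1) * (1 + 2/(Real.pi*β))^d * (2/((d:ℝ)*(1-β) - 2))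

def c6 (d : ℕ) : ℝ := sInf { v : ℝ | ∃ β : ℝ, 0 < β ∧ β < 1 - 2/(d:ℝ) ∧ v = c6b d β }

def c2 (d : ℕ) (β : ℝ) : ℝ := 32 * ((2:ℝ)^((2:ℝ)*(d:ℝ)/3) + 3) * c8 d β

def c3 (d : ℕ) : ℝ := (2:ℝ)^((d:ℝ)/6) * ((2:ℝ)^((d:ℝ)/6) + 3) * c6 d

def c4 (d : ℕ) (β : ℝ) : ℝ := 32 * ((2:ℝ)^((2:ℝ)*(d:ℝ)/3) + 3) * (c9 β)^d

def c5 (d : ℕ) : ℝ := (2:ℝ)^((d:ℝ)/6) * ((2:ℝ)^((d:ℝ)/6) + 3) * 8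

def c1 (d : ℕ) (β : ℝ) : ℝ := max (c2 d β) ((Real.sqrt 3/6) * c3 d)

/-- `L_β(λ,τ₀) = max((4τ₀λ^{-2})^{1/β}, τ₀λ^{-2})` -/
def Lbeta (β lam τ₀ : ℝ) : ℝ := max ((4*τ₀*(lam^2)⁻¹)^(1/β)) (τ₀*(lam^2)⁻¹)

section Helpers
open Real

lemma reg_pos (r : ℝ) : 0 < reg r := by
  have : (0:ℝ) < 1 + r^2 := by positivity
  exact Real.sqrt_pos.mpr this

lemma one_le_reg (r : ℝ) : 1 ≤ reg r := by
  rw [show (1:ℝ) = Real.sqrt 1 by simp [Real.sqrt_one]]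
  exact Real.sqrt_le_sqrt (by nlinarith [sq_nonneg r])

lemma abs_le_reg (r : ℝ) : |r| ≤ reg r := by
  rw [show |r| = Real.sqrt (r^2) by rw [Real.sqrt_sq_eq_abs]]
  exact Real.sqrt_le_sqrt (by nlinarith)

lemma le_reg (r : ℝ) : r ≤ reg r := (le_abs_self r).trans (abs_le_reg r)

lemma one_le_reg_rpow (r : ℝ) {e : ℝ} (he : 0 ≤ e) : 1 ≤ reg r ^ e :=
  Real.one_le_rpow (one_le_reg r) he

lemma mem_Lambda1 {L : ℕ} {m : ℤ} : m ∈ Lambda1 L ↔ (-(L:ℤ) < 2*m ∧ 2*m ≤ L) := by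
  simp only [Lambda1, Finset.mem_filter, Finset.mem_Icc]
  omega

lemma Lambda1_eq (L : ℕ) : Lambda1 L = Finset.Ioc ((L:ℤ)/2 - L) ((L:ℤ)/2) := by
  ext m
  rw [mem_Lambda1, Finset.mem_Ioc]
  omega

lemma card_Lambda1 (L : ℕ) : (Lambda1 L).card = L := by
  rw [Lambda1_eq, Int.card_Ioc]
  omega

lemma natAbs_le_of_mem {L : ℕ} {m : ℤ} (hm : m ∈ Lambda1 L) : 2 * m.natAbs ≤ L := by
  rw [mem_Lambda1] at hm; omega

lemma zfn_eq (ξ : ℕ) (hξ : ξ = 0 ∨ ξ = 1) (k : ℝ) :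
    zfn ξ k = 1 + (if ξ = 0 then (-1:ℂ) else 1) *
      (↑(Real.cos (2*Real.pi*k)) - ↑(Real.sin (2*Real.pi*k)) * Complex.I) := by
  have h : (-(2*Real.pi*Complex.I))*((k:ℝ):ℂ) = ((-(2*Real.pi*k) : ℝ) : ℂ) * Complex.I := by
    push_cast; ring
  have hexp : Complex.exp (-(2*Real.pi*Complex.I)*((k:ℝ):ℂ))
      = ↑(Real.cos (2*Real.pi*k)) - ↑(Real.sin (2*Real.pi*k)) * Complex.I := by
    rw [h, Complex.exp_mul_I, ← Complex.ofReal_cos, ← Complex.ofReal_sin,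
      Real.cos_neg, Real.sin_neg]
    push_cast; ring
  rcases hξ with h0 | h1
  · subst h0
    rw [zfn, if_pos rfl, hexp, if_pos rfl]
    ring
  · subst h1
    rw [zfn, if_neg one_ne_zero, hexp, if_neg one_ne_zero]
    ring

lemma normSq_zfn (ξ : ℕ) (hξ : ξ = 0 ∨ ξ = 1) (k : ℝ) :
    Complex.normSq (zfn ξ k)
      = 2 + (if ξ = 0 then (-1:ℝ) else 1) * (2 * Real.cos (2*Real.pi*k)) := by
  have hsc := Real.sin_sq_add_cos_sq (2*Real.pi*k)
  rcases hξ with h0 | h1 <;> subst ‹_›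
  · rw [zfn_eq 0 (Or.inl rfl) k, if_pos rfl]
    simp only [Complex.normSq_apply, Complex.add_re, Complex.add_im, Complex.one_re,
      Complex.one_im, Complex.mul_re, Complex.mul_im, Complex.sub_re, Complex.sub_im,
      Complex.neg_re, Complex.neg_im, Complex.I_re, Complex.I_im, Complex.ofReal_re,
      Complex.ofReal_im, if_pos rfl]
    norm_num
    nlinarith [hsc]
  · rw [zfn_eq 1 (Or.inr rfl) k, if_neg one_ne_zero]
    simp only [Complex.normSq_apply, Complex.add_re, Complex.add_im, Complex.one_re,
      Complex.one_im, Complex.mul_re, Complex.mul_im, Complex.sub_re, Complex.sub_im,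
      Complex.neg_re, Complex.neg_im, Complex.I_re, Complex.I_im, Complex.ofReal_re,
      Complex.ofReal_im, if_neg one_ne_zero]
    norm_num
    nlinarith [hsc]

lemma abs_zfn_le_two (ξ : ℕ) (k : ℝ) : ‖zfn ξ k‖ ≤ 2 := by
  unfold zfn
  have h : ‖Complex.exp (-(2*Real.pi*Complex.I)*((k:ℝ):ℂ))‖ = 1 := by
    rw [Complex.norm_exp]
    have : (-(2*Real.pi*Complex.I)*((k:ℝ):ℂ)).re = 0 := by simp
    rw [this, Real.exp_zero]
  split
  · calc ‖1 - Complex.exp (-(2*Real.pi*Complex.I)*((k:ℝ):ℂ))‖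
        ≤ ‖(1:ℂ)‖ + ‖Complex.exp (-(2*Real.pi*Complex.I)*((k:ℝ):ℂ))‖ := by
          exact norm_sub_le _ _
      _ = 2 := by rw [h, norm_one]; norm_num
  · calc ‖1 + Complex.exp (-(2*Real.pi*Complex.I)*((k:ℝ):ℂ))‖
        ≤ ‖(1:ℂ)‖ + ‖Complex.exp (-(2*Real.pi*Complex.I)*((k:ℝ):ℂ))‖ :=
          norm_add_le _ _
      _ = 2 := by rw [h, norm_one]; norm_num

end Helpers
section Helpers2
open Real

lemma abs_zfn_zero_ge {k : ℝ} (h1 : |k| ≤ 1/2) : 4*|k| ≤ ‖zfn 0 k‖ := by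
  rw [Complex.norm_def]
  rw [show Complex.normSq (zfn 0 k) = 2 + (if (0:ℕ) = 0 then (-1:ℝ) else 1) * (2 * Real.cos (2*Real.pi*k)) from normSq_zfn 0 (Or.inl rfl) k]
  rw [Real.le_sqrt (by positivity) (by norm_num; nlinarith [Real.cos_le_one (2*Real.pi*k)])]
  have hs : Real.sin (Real.pi * k) ^ 2 = 1/2 - Real.cos (2*(Real.pi*k))/2 :=
    Real.sin_sq_eq_half_sub _
  have hj : 2*|k| ≤ Real.sin (Real.pi * |k|) := by
    have := Real.mul_le_sin (x := Real.pi * |k|) (by positivity)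
      (by nlinarith [Real.pi_pos, abs_nonneg k])
    calc 2*|k| = 2/Real.pi * (Real.pi * |k|) := by
          field_simp
      _ ≤ Real.sin (Real.pi * |k|) := this
  have hsq : Real.sin (Real.pi * |k|) ^ 2 = Real.sin (Real.pi * k) ^ 2 := by
    rcases abs_choice k with h | h <;> rw [h]
    rw [mul_neg, Real.sin_neg]; ring
  have h2 : (2*|k|)^2 ≤ Real.sin (Real.pi * k) ^ 2 := by
    rw [← hsq]
    exact pow_le_pow_left₀ (by positivity) hj 2
  rw [show (2:ℝ)*Real.pi*k = 2*(Real.pi*k) from by ring]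
  norm_num
  nlinarith [h2, hs]

lemma abs_zfn_one_ge {k : ℝ} (h1 : |k| ≤ 1/2) : 4*(1/2 - |k|) ≤ ‖zfn 1 k‖ := by
  rw [Complex.norm_def]
  rw [show Complex.normSq (zfn 1 k) = 2 + (if (1:ℕ) = 0 then (-1:ℝ) else 1) * (2 * Real.cos (2*Real.pi*k)) from normSq_zfn 1 (Or.inr rfl) k]
  rw [Real.le_sqrt (by nlinarith [abs_nonneg k] : (0:ℝ) ≤ 4*(1/2 - |k|))
    (by norm_num; nlinarith [Real.neg_one_le_cos (2*Real.pi*k)])]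
  have hc2 : Real.cos (2*(Real.pi*k)) = 2 * Real.cos (Real.pi*k)^2 - 1 :=
    Real.cos_two_mul _
  have hj : 2*(1/2 - |k|) ≤ Real.cos (Real.pi * |k|) := by
    have := Real.mul_le_sin (x := Real.pi/2 - Real.pi * |k|)
      (by nlinarith [Real.pi_pos, abs_nonneg k]) (by nlinarith [Real.pi_pos, abs_nonneg k])
    have hss : Real.sin (Real.pi/2 - Real.pi*|k|) = Real.cos (Real.pi*|k|) :=
      Real.sin_pi_div_two_sub _
    rw [hss] at this
    calc 2*(1/2 - |k|) = 2/Real.pi * (Real.pi/2 - Real.pi*|k|) := by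
          field_simp
      _ ≤ Real.cos (Real.pi * |k|) := this
  have hsq : Real.cos (Real.pi * |k|) ^ 2 = Real.cos (Real.pi * k) ^ 2 := by
    rcases abs_choice k with h | h <;> rw [h]
    rw [mul_neg, Real.cos_neg]
  have h2 : (2*(1/2-|k|))^2 ≤ Real.cos (Real.pi * k) ^ 2 := by
    rw [← hsq]
    exact pow_le_pow_left₀ (by nlinarith [abs_nonneg k]) hj 2
  rw [show (2:ℝ)*Real.pi*k = 2*(Real.pi*k) from by ring]
  norm_num
  nlinarith [h2, hc2]

/-- index used in the fiber decomposition of the one-dimensional sum -/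
def nuIdx (ξ L : ℕ) (m : ℤ) : ℕ := if ξ = 0 then m.natAbs else L/2 - m.natAbs

lemma nuIdx_le {ξ L : ℕ} {m : ℤ} (hm : m ∈ Lambda1 L) : nuIdx ξ L m ≤ L/2 := by
  have := natAbs_le_of_mem hm
  unfold nuIdx; split <;> omega

lemma abs_div_le_half {L : ℕ} {m : ℤ} (hL : 1 ≤ L) (hm : m ∈ Lambda1 L) :
    |(m:ℝ)/(L:ℝ)| ≤ 1/2 := by
  have hm2 := natAbs_le_of_mem hm
  have hL0 : (0:ℝ) < L := by exact_mod_cast hL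
  have h : |(m:ℝ)| = (m.natAbs:ℝ) := by
    simp [Nat.cast_natAbs]
  rw [abs_div, abs_of_pos hL0, h, div_le_iff₀ hL0]
  have : (2:ℝ) * m.natAbs ≤ L := by exact_mod_cast hm2
  linarith

lemma nuIdx_le_abs_zfn {ξ L : ℕ} {m : ℤ} (hξ : ξ = 0 ∨ ξ = 1) (hL : 1 ≤ L)
    (hm : m ∈ Lambda1 L) :
    4*(nuIdx ξ L m : ℝ)/(L:ℝ) ≤ ‖zfn ξ ((m:ℝ)/(L:ℝ))‖ := by
  have hk := abs_div_le_half hL hm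
  have hL0 : (0:ℝ) < L := by exact_mod_cast hL
  have habs : |(m:ℝ)/(L:ℝ)| = (m.natAbs : ℝ)/(L:ℝ) := by
    have h : |(m:ℝ)| = (m.natAbs:ℝ) := by
      simp [Nat.cast_natAbs]
    rw [abs_div, abs_of_pos hL0, h]
  rcases hξ with h | h <;> subst h
  · have := abs_zfn_zero_ge hk
    rw [habs] at this
    unfold nuIdx
    rw [if_pos rfl]
    calc 4*(m.natAbs:ℝ)/L = 4*((m.natAbs:ℝ)/L) := by ring
      _ ≤ _ := this
  · have := abs_zfn_one_ge hk
    rw [habs] at this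
    unfold nuIdx
    rw [if_neg one_ne_zero]
    refine le_trans ?_ this
    have h1 : ((L/2 - m.natAbs : ℕ) : ℝ) ≤ (L:ℝ)/2 - (m.natAbs:ℝ) := by
      have hm2 := natAbs_le_of_mem hm
      have h2 : ((L/2 : ℕ):ℝ) ≤ (L:ℝ)/2 := by
        have hh : 2 * (L/2) ≤ L := by omega
        have : (2:ℝ) * ((L/2:ℕ):ℝ) ≤ L := by exact_mod_cast hh
        linarith
      have h3 : m.natAbs ≤ L/2 := by omega
      push_cast [Nat.cast_sub h3]
      linarith
    rw [div_le_iff₀ hL0]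
    have heq : 4*(1/2 - (m.natAbs:ℝ)/L) * L = 2*L - 4*(m.natAbs:ℝ) := by field_simp; ring
    rw [heq]
    linarith

lemma inv_reg_rpow_le_one (r : ℝ) : (reg r ^ ((1:ℝ)/2))⁻¹ ≤ 1 := by
  have h := one_le_reg_rpow r (e := (1:ℝ)/2) (by norm_num)
  calc (reg r ^ ((1:ℝ)/2))⁻¹ ≤ (1:ℝ)⁻¹ := inv_anti₀ one_pos h
    _ = 1 := inv_one

lemma inv_reg_rpow_le {r c α : ℝ} (hc : 0 < c) (hcr : c ≤ r) (hα : 0 < α) (hα' : α ≤ 1/2) :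
    (reg r ^ ((1:ℝ)/2))⁻¹ ≤ c ^ (-α) := by
  rcases le_or_gt 1 c with h1 | h1
  · have hca : c ^ α ≤ reg r ^ ((1:ℝ)/2) := by
      calc c ^ α ≤ c ^ ((1:ℝ)/2) := Real.rpow_le_rpow_of_exponent_le h1 hα'
        _ ≤ reg r ^ ((1:ℝ)/2) :=
          Real.rpow_le_rpow (le_of_lt hc) (hcr.trans (le_reg r)) (by norm_num)
    rw [Real.rpow_neg (le_of_lt hc)]
    exact inv_anti₀ (by positivity) hca
  · calc (reg r ^ ((1:ℝ)/2))⁻¹ ≤ 1 := inv_reg_rpow_le_one r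
      _ ≤ c ^ (-α) := Real.one_le_rpow_of_pos_of_le_one_of_nonpos hc (le_of_lt h1) (by linarith)

end Helpers2
section Helpers3
open Real

lemma two_rpow_le_one_add {t : ℝ} (h0 : 0 ≤ t) (h1 : t ≤ 1) : (2:ℝ)^t ≤ 1 + t := by
  have h := convexOn_exp.2 (Set.mem_univ (0:ℝ)) (Set.mem_univ (Real.log 2))
    (by linarith : (0:ℝ) ≤ 1 - t) h0 (by ring)
  simp only [smul_eq_mul, mul_zero, zero_add, Real.exp_zero, mul_one,
    Real.exp_log two_pos] at h
  rw [Real.rpow_def_of_pos two_pos]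
  calc Real.exp (Real.log 2 * t) = Real.exp (t * Real.log 2) := by ring_nf
    _ ≤ 1 - t + t*2 := h
    _ = 1 + t := by ring

lemma sum_rpow_le {M : ℕ} {α : ℝ} (h0 : 0 < α) (h1 : α < 1) :
    ∑ j ∈ Finset.range M, ((j:ℝ)+1)^(-α) ≤ (M:ℝ)^(1-α)/(1-α) := by
  rcases Nat.eq_zero_or_pos M with hM | hM
  · subst hM
    simp [Real.zero_rpow (by linarith : (1:ℝ)-α ≠ 0)]
  · obtain ⟨N, rfl⟩ : ∃ N, M = N + 1 := ⟨M - 1, by omega⟩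
    rw [Finset.sum_range_succ']
    have hanti : AntitoneOn (fun x : ℝ => x^(-α)) (Set.Icc (1:ℝ) (1 + (N:ℕ))) := by
      intro a ha b hb hab
      exact Real.rpow_le_rpow_of_nonpos (lt_of_lt_of_le one_pos ha.1) hab (by linarith)
    have key := hanti.sum_le_integral
    have hint : ∫ x in (1:ℝ)..(1 + (N:ℕ)), x^(-α)
        = ((1 + (N:ℕ))^(1-α) - 1)/(1-α) := by
      rw [integral_rpow (Or.inl (by linarith : (-1:ℝ) < -α))]
      rw [show -α + 1 = 1 - α by ring]
      rw [Real.one_rpow]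
    have h2 : ∑ i ∈ Finset.range N, ((i:ℝ)+1+1)^(-α)
        ≤ ((1 + (N:ℕ))^(1-α) - 1)/(1-α) := by
      rw [← hint]
      refine le_trans (le_of_eq ?_) key
      apply Finset.sum_congr rfl
      intro i _
      push_cast
      ring_nf
    have hc : ((N:ℝ)+1) = (1 + (N:ℕ) : ℝ) := by push_cast; ring
    have hpow : (0:ℝ) ≤ ((N:ℝ)+1)^(1-α) := Real.rpow_nonneg (by positivity) _
    push_cast
    rw [show ((0:ℝ)+1) = 1 by ring, Real.one_rpow]
    have h2' : ∑ i ∈ Finset.range N, ((i:ℝ)+1+1)^(-α)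
        ≤ (((N:ℝ)+1)^(1-α) - 1)/(1-α) := by rw [hc]; exact h2
    have hd : (0:ℝ) < 1 - α := by linarith
    have hfrac : (1:ℝ) ≤ 1/(1-α) := by rw [le_div_iff₀ hd]; linarith
    have hsplit : (((N:ℝ)+1)^(1-α) - 1)/(1-α)
        = ((N:ℝ)+1)^(1-α)/(1-α) - 1/(1-α) := by ring
    linarith [h2']

end Helpers3
section Helpers4
open Real

lemma coeff_bound {b : ℝ} (hb0 : 0 < b) (hb1 : b < 1) :
    1/2 + 2*(2:ℝ)^(-((1-b)/2))/(1+b)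
      ≤ (2:ℝ)^((1-b)/2) * (1 + 2/(Real.pi*b)) := by
  set α := (1-b)/2 with hα
  set u := (2:ℝ)^α with hu
  set v := (2:ℝ)^(-α) with hv
  have hv0 : 0 < v := Real.rpow_pos_of_pos two_pos _
  have hu1 : 1 ≤ u := Real.one_le_rpow one_le_two (by rw [hα]; linarith)
  have huv : u * v = 1 := by
    rw [hu, hv, ← Real.rpow_add two_pos]; simp
  have hvv : 2 * v * v = (2:ℝ)^b := by
    have h1 : v * v = (2:ℝ)^(-α + -α) := by rw [hv, Real.rpow_add two_pos]
    have h2 : (2:ℝ) * (2:ℝ)^(-α + -α) = (2:ℝ)^(1 + (-α + -α)) := by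
      rw [Real.rpow_add two_pos 1 (-α + -α), Real.rpow_one]
    have h3 : 1 + (-α + -α) = b := by rw [hα]; ring
    rw [mul_assoc, h1, h2, h3]
  have hber : (2:ℝ)^b ≤ 1 + b := two_rpow_le_one_add hb0.le hb1.le
  have hP : (1:ℝ)/2 ≤ 2/(Real.pi*b) := by
    have hpb : Real.pi * b < 4 := by nlinarith [Real.pi_lt_d2]
    have hpb0 : 0 < Real.pi * b := by positivity
    rw [div_le_div_iff₀ two_pos hpb0]
    linarith
  have ha1 : 2*v/(1+b) ≤ u := by
    rw [div_le_iff₀ (by linarith : (0:ℝ) < 1+b)]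
    nlinarith [mul_nonneg (by linarith : (0:ℝ) ≤ u) (by linarith [hvv ▸ hber] : (0:ℝ) ≤ 1 + b - 2*v*v)]
  have hP2 : 2/(Real.pi*b) ≤ u * (2/(Real.pi*b)) := by
    nlinarith [hP]
  nlinarith [ha1, hP, hP2, hu1]

lemma oneDim_bound {L : ℕ} {b s : ℝ} (hL : 4 ≤ L) (hb0 : 0 < b) (hb1 : b < 1)
    (ξ : ℕ) (hξ : ξ = 0 ∨ ξ = 1) (hs1 : 1 ≤ s) (hs2 : s ≤ (L:ℝ)/4) :
    ((L:ℝ))⁻¹ * ∑ m ∈ Lambda1 L, (reg (s * ‖zfn ξ ((m:ℝ)/(L:ℝ))‖) ^ ((1:ℝ)/2))⁻¹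
      ≤ (2:ℝ)^((1-b)/2) * (1 + 2/(Real.pi*b)) * s^(-((1-b)/2)) := by
  set α := (1-b)/2 with hα
  have hα0 : 0 < α := by rw [hα]; linarith
  have hα2 : α ≤ 1/2 := by rw [hα]; linarith
  have hL0 : (0:ℝ) < L := by positivity
  have hs0 : 0 < s := lt_of_lt_of_le one_pos hs1
  set G : ℕ → ℝ := fun j => if j = 0 then 1 else (4*s*(j:ℝ)/(L:ℝ))^(-α) with hG
  have hGnn : ∀ j, 0 ≤ G j := by
    intro j; rw [hG]; dsimp only; split
    · norm_num
    · exact Real.rpow_nonneg (by positivity) _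
  -- pointwise bound
  have hpt : ∀ m ∈ Lambda1 L,
      (reg (s * ‖zfn ξ ((m:ℝ)/(L:ℝ))‖) ^ ((1:ℝ)/2))⁻¹ ≤ G (nuIdx ξ L m) := by
    intro m hm
    rw [hG]; dsimp only
    split
    · exact inv_reg_rpow_le_one _
    · rename_i hj
      have hj1 : 1 ≤ (nuIdx ξ L m : ℝ) := by
        have : 1 ≤ nuIdx ξ L m := Nat.one_le_iff_ne_zero.mpr hj
        exact_mod_cast this
      apply inv_reg_rpow_le (by positivity) ?_ hα0 hα2
      have hzl := nuIdx_le_abs_zfn hξ (by omega : 1 ≤ L) hm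
      calc 4*s*(nuIdx ξ L m : ℝ)/(L:ℝ) = s * (4*(nuIdx ξ L m : ℝ)/(L:ℝ)) := by ring
        _ ≤ s * ‖zfn ξ ((m:ℝ)/(L:ℝ))‖ := by
            apply mul_le_mul_of_nonneg_left hzl hs0.le
  -- fiber counting
  have hmaps : ∀ m ∈ Lambda1 L, nuIdx ξ L m ∈ Finset.range (L/2+1) := fun m hm =>
    Finset.mem_range.mpr (Nat.lt_succ_of_le (nuIdx_le hm))
  have hfiber : ∑ m ∈ Lambda1 L, G (nuIdx ξ L m) ≤ 2 * ∑ j ∈ Finset.range (L/2+1), G j := by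
    rw [← Finset.sum_fiberwise_of_maps_to hmaps (fun m => G (nuIdx ξ L m)),
      Finset.mul_sum]
    apply Finset.sum_le_sum
    intro j _
    have hcard : ((Lambda1 L).filter (fun m => nuIdx ξ L m = j)).card ≤ 2 := by
      obtain ⟨n, hn⟩ : ∃ n : ℕ, ∀ m ∈ (Lambda1 L).filter (fun m => nuIdx ξ L m = j),
          m.natAbs = n := by
        rcases hξ with h | h <;> subst h
        · refine ⟨j, fun m hm => ?_⟩
          have h2 := (Finset.mem_filter.mp hm).2
          unfold nuIdx at h2
          simpa using h2
        · refine ⟨L/2 - j, fun m hm => ?_⟩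
          have h2 := (Finset.mem_filter.mp hm).2
          have hna := natAbs_le_of_mem (Finset.mem_filter.mp hm).1
          unfold nuIdx at h2
          rw [if_neg one_ne_zero] at h2
          omega
      have hsub : (Lambda1 L).filter (fun m => nuIdx ξ L m = j) ⊆ {(n:ℤ), -(n:ℤ)} := by
        intro m hm
        rcases Int.natAbs_eq_iff.mp (hn m hm) with h' | h' <;> simp [h']
      calc ((Lambda1 L).filter (fun m => nuIdx ξ L m = j)).card
          ≤ ({(n:ℤ), -(n:ℤ)} : Finset ℤ).card := Finset.card_le_card hsub
        _ ≤ 2 := by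
            apply le_trans (Finset.card_insert_le _ _)
            simp
    calc ∑ m ∈ (Lambda1 L).filter (fun m => nuIdx ξ L m = j), G (nuIdx ξ L m)
        = ∑ m ∈ (Lambda1 L).filter (fun m => nuIdx ξ L m = j), G j := by
          apply Finset.sum_congr rfl
          intro m hm
          rw [(Finset.mem_filter.mp hm).2]
      _ = ((Lambda1 L).filter (fun m => nuIdx ξ L m = j)).card * G j := by
          rw [Finset.sum_const, nsmul_eq_mul]
      _ ≤ 2 * G j := by
          apply mul_le_mul_of_nonneg_right _ (hGnn j)
          exact_mod_cast hcard
  -- evaluate the range sum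
  have hrange : ∑ j ∈ Finset.range (L/2+1), G j
      = 1 + ∑ j ∈ Finset.range (L/2), (4*s*((j:ℝ)+1)/(L:ℝ))^(-α) := by
    rw [Finset.sum_range_succ']
    rw [hG]; dsimp only
    rw [if_pos rfl]
    rw [add_comm]
    congr 1
    apply Finset.sum_congr rfl
    intro j _
    rw [if_neg (Nat.succ_ne_zero j)]
    push_cast
    ring_nf
  have hsum2 : ∑ j ∈ Finset.range (L/2), (4*s*((j:ℝ)+1)/(L:ℝ))^(-α)
      ≤ ((L:ℝ)/2) * (2*s)^(-α) / (1-α) := by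
    have hfac : ∀ j : ℕ, (4*s*((j:ℝ)+1)/(L:ℝ))^(-α)
        = (4*s/(L:ℝ))^(-α) * ((j:ℝ)+1)^(-α) := by
      intro j
      rw [← Real.mul_rpow (by positivity) (by positivity)]
      congr 1
      ring
    simp only [hfac]
    rw [← Finset.mul_sum]
    have hS := sum_rpow_le (M := L/2) hα0 (by linarith : α < 1)
    have h1 : (4*s/(L:ℝ))^(-α) * ∑ j ∈ Finset.range (L/2), ((j:ℝ)+1)^(-α)
        ≤ (4*s/(L:ℝ))^(-α) * (((L/2:ℕ):ℝ)^(1-α)/(1-α)) :=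
      mul_le_mul_of_nonneg_left hS (Real.rpow_nonneg (by positivity) _)
    have h2 : ((L/2:ℕ):ℝ)^(1-α) ≤ ((L:ℝ)/2)^(1-α) := by
      apply Real.rpow_le_rpow (by positivity) _ (by linarith)
      have hh : 2 * (L/2) ≤ L := by omega
      have : (2:ℝ) * ((L/2:ℕ):ℝ) ≤ (L:ℝ) := by exact_mod_cast hh
      linarith
    have e1 : ((L:ℝ)/2)^(1-α) = ((L:ℝ)/2) * ((L:ℝ)/2)^(-α) := by
      rw [show (1:ℝ) - α = 1 + (-α) by ring, Real.rpow_add (by positivity), Real.rpow_one]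
    have e2 : (4*s/(L:ℝ))^(-α) * ((L:ℝ)/2)^(-α) = (2*s)^(-α) := by
      rw [← Real.mul_rpow (by positivity) (by positivity)]
      congr 1
      field_simp
      ring
    have h3 : (4*s/(L:ℝ))^(-α) * (((L:ℝ)/2)^(1-α)) = ((L:ℝ)/2) * (2*s)^(-α) := by
      rw [e1]
      calc (4*s/(L:ℝ))^(-α) * ((L:ℝ)/2 * ((L:ℝ)/2)^(-α))
          = ((L:ℝ)/2) * ((4*s/(L:ℝ))^(-α) * ((L:ℝ)/2)^(-α)) := by ring
        _ = ((L:ℝ)/2) * (2*s)^(-α) := by rw [e2]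
    have hd : (0:ℝ) < 1-α := by rw [hα]; linarith
    calc (4*s/(L:ℝ))^(-α) * ∑ j ∈ Finset.range (L/2), ((j:ℝ)+1)^(-α)
        ≤ (4*s/(L:ℝ))^(-α) * (((L/2:ℕ):ℝ)^(1-α)/(1-α)) := h1
      _ ≤ (4*s/(L:ℝ))^(-α) * (((L:ℝ)/2)^(1-α)/(1-α)) := by
          apply mul_le_mul_of_nonneg_left _ (Real.rpow_nonneg (by positivity) _)
          exact div_le_div_of_nonneg_right h2 hd.le
      _ = ((L:ℝ)/2) * (2*s)^(-α) / (1-α) := by rw [← h3]; ring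
  -- assemble
  have hd : (0:ℝ) < 1-α := by rw [hα]; linarith
  have hd1 : (1:ℝ) - α = (1+b)/2 := by rw [hα]; ring
  have hmul : (2*s)^(-α) = (2:ℝ)^(-α) * s^(-α) := Real.mul_rpow (by norm_num) hs0.le
  have hLs : 2/(L:ℝ) ≤ (1/2) * s^(-α) := by
    have hL4 : (1:ℝ) ≤ (L:ℝ)/4 := by
      have : (4:ℝ) ≤ (L:ℝ) := by exact_mod_cast hL
      linarith
    have t1 : ((L:ℝ)/4)^(-α) ≤ s^(-α) :=
      Real.rpow_le_rpow_of_nonpos hs0 hs2 (by linarith)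
    have t2 : ((L:ℝ)/4)^(-((1:ℝ)/2)) ≤ ((L:ℝ)/4)^(-α) :=
      Real.rpow_le_rpow_of_exponent_le hL4 (by linarith)
    have h12 : ((L:ℝ)/4)^((1:ℝ)/2) ≤ ((L:ℝ)/4) := by
      calc ((L:ℝ)/4)^((1:ℝ)/2) ≤ ((L:ℝ)/4)^(1:ℝ) :=
            Real.rpow_le_rpow_of_exponent_le hL4 (by norm_num)
        _ = (L:ℝ)/4 := Real.rpow_one _
    have t3 : 4/(L:ℝ) ≤ ((L:ℝ)/4)^(-((1:ℝ)/2)) := by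
      rw [Real.rpow_neg (by positivity)]
      have hinv : ((L:ℝ)/4)⁻¹ ≤ (((L:ℝ)/4)^((1:ℝ)/2))⁻¹ :=
        inv_anti₀ (by positivity) h12
      calc 4/(L:ℝ) = ((L:ℝ)/4)⁻¹ := by
            rw [inv_div]
        _ ≤ (((L:ℝ)/4)^((1:ℝ)/2))⁻¹ := hinv
    have h4 := le_trans (le_trans t3 t2) t1
    have h5 : 2/(L:ℝ) = (1/2)*(4/(L:ℝ)) := by ring
    linarith
  have c1 : ∑ m ∈ Lambda1 L, (reg (s * ‖zfn ξ ((m:ℝ)/(L:ℝ))‖) ^ ((1:ℝ)/2))⁻¹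
      ≤ 2 * (1 + ((L:ℝ)/2) * (2*s)^(-α)/(1-α)) := by
    calc ∑ m ∈ Lambda1 L, (reg (s * ‖zfn ξ ((m:ℝ)/(L:ℝ))‖) ^ ((1:ℝ)/2))⁻¹
        ≤ ∑ m ∈ Lambda1 L, G (nuIdx ξ L m) := Finset.sum_le_sum hpt
      _ ≤ 2 * ∑ j ∈ Finset.range (L/2+1), G j := hfiber
      _ = 2 * (1 + ∑ j ∈ Finset.range (L/2), (4*s*((j:ℝ)+1)/(L:ℝ))^(-α)) := by rw [hrange]
      _ ≤ 2 * (1 + ((L:ℝ)/2) * (2*s)^(-α)/(1-α)) := by linarith [hsum2]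
  have c2 : ((L:ℝ))⁻¹ * (2 * (1 + ((L:ℝ)/2) * (2*s)^(-α)/(1-α)))
      = 2/(L:ℝ) + (2*s)^(-α)/(1-α) := by
    field_simp
  have main : ((L:ℝ))⁻¹ * ∑ m ∈ Lambda1 L,
      (reg (s * ‖zfn ξ ((m:ℝ)/(L:ℝ))‖) ^ ((1:ℝ)/2))⁻¹
      ≤ (1/2 + 2*(2:ℝ)^(-α)/(1+b)) * s^(-α) := by
    calc ((L:ℝ))⁻¹ * ∑ m ∈ Lambda1 L,
        (reg (s * ‖zfn ξ ((m:ℝ)/(L:ℝ))‖) ^ ((1:ℝ)/2))⁻¹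
        ≤ ((L:ℝ))⁻¹ * (2 * (1 + ((L:ℝ)/2) * (2*s)^(-α)/(1-α))) :=
          mul_le_mul_of_nonneg_left c1 (by positivity)
      _ = 2/(L:ℝ) + (2*s)^(-α)/(1-α) := c2
      _ ≤ (1/2) * s^(-α) + (2*s)^(-α)/(1-α) := by linarith [hLs]
      _ = (1/2 + 2*(2:ℝ)^(-α)/(1+b)) * s^(-α) := by
          rw [hmul, hd1]
          have hb' : (0:ℝ) < 1 + b := by linarith
          field_simp
  calc ((L:ℝ))⁻¹ * ∑ m ∈ Lambda1 L,
      (reg (s * ‖zfn ξ ((m:ℝ)/(L:ℝ))‖) ^ ((1:ℝ)/2))⁻¹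
      ≤ (1/2 + 2*(2:ℝ)^(-α)/(1+b)) * s^(-α) := main
    _ ≤ ((2:ℝ)^α * (1 + 2/(Real.pi*b))) * s^(-α) :=
        mul_le_mul_of_nonneg_right (coeff_bound hb0 hb1) (Real.rpow_nonneg hs0.le _)
    _ = (2:ℝ)^α * (1 + 2/(Real.pi*b)) * s^(-α) := by ring

end Helpers4
section Helpers5
open Real

lemma Phi_eq_small {L : ℕ} {β R₁ : ℝ} (x₁ : ℤ) (hR0 : 0 ≤ R₁) (hR : R₁ ≤ (L:ℝ)^β) :
    Phi L β R₁ x₁ = reg (x₁:ℝ) ^ ((1:ℝ)/3)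
      * max 1 (reg R₁ ^ ((1:ℝ)/2) / reg (x₁:ℝ) ^ ((1:ℝ)/2)) := by
  have habs : |R₁| = R₁ := abs_of_nonneg hR0
  have hLb : (0:ℝ) ≤ (L:ℝ)^β := Real.rpow_nonneg (by positivity) _
  unfold Phi gammaFn varphiFn aL
  rw [if_pos (by rw [habs]; nlinarith : |R₁| ≤ 3/2*(L:ℝ)^β),
    if_pos (by rw [habs]; exact hR), sub_zero]

lemma phi2_ge (x₁ : ℤ) (r : ℝ) :
    reg (x₁:ℝ) ^ (-((1:ℝ)/6)) * reg r ^ ((1:ℝ)/2)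
      ≤ reg (x₁:ℝ) ^ ((1:ℝ)/3) * max 1 (reg r ^ ((1:ℝ)/2) / reg (x₁:ℝ) ^ ((1:ℝ)/2)) := by
  set X := reg (x₁:ℝ) with hX
  set W := reg r ^ ((1:ℝ)/2) with hW
  have hX0 : 0 < X := reg_pos _
  have hW0 : 0 < W := Real.rpow_pos_of_pos (reg_pos _) _
  have hXh : 0 < X ^ ((1:ℝ)/2) := Real.rpow_pos_of_pos hX0 _
  rcases le_total W (X ^ ((1:ℝ)/2)) with h | h
  · calc X ^ (-((1:ℝ)/6)) * W ≤ X ^ (-((1:ℝ)/6)) * X ^ ((1:ℝ)/2) :=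
        mul_le_mul_of_nonneg_left h (Real.rpow_nonneg hX0.le _)
      _ = X ^ ((1:ℝ)/3) := by
          rw [← Real.rpow_add hX0]; norm_num
      _ = X ^ ((1:ℝ)/3) * 1 := (mul_one _).symm
      _ ≤ X ^ ((1:ℝ)/3) * max 1 (W / X ^ ((1:ℝ)/2)) :=
          mul_le_mul_of_nonneg_left (le_max_left _ _) (Real.rpow_nonneg hX0.le _)
  · have e2 : X ^ ((1:ℝ)/3) / X ^ ((1:ℝ)/2) = X ^ (-((1:ℝ)/6)) := by
      rw [← Real.rpow_sub hX0]; norm_num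
    have hkey : X ^ (-((1:ℝ)/6)) * W = X ^ ((1:ℝ)/3) * (W / X ^ ((1:ℝ)/2)) := by
      rw [← e2]; ring
    rw [hkey]
    exact mul_le_mul_of_nonneg_left (le_max_right _ _) (Real.rpow_nonneg hX0.le _)

lemma inv_prod_le {d : ℕ} (x : Fin d → ℤ) (r : Fin d → ℝ) :
    (∏ j, reg ((x j:ℝ)) ^ ((1:ℝ)/3)
        * max 1 (reg (r j) ^ ((1:ℝ)/2) / reg ((x j:ℝ)) ^ ((1:ℝ)/2)))⁻¹
    ≤ ∏ j, (reg ((x j:ℝ)) ^ ((1:ℝ)/6) * (reg (r j) ^ ((1:ℝ)/2))⁻¹) := by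
  have hc : ∀ j : Fin d, (0:ℝ) < reg ((x j:ℝ)) ^ (-((1:ℝ)/6)) * reg (r j) ^ ((1:ℝ)/2) :=
    fun j => mul_pos (Real.rpow_pos_of_pos (reg_pos _) _) (Real.rpow_pos_of_pos (reg_pos _) _)
  have hle : ∏ j, (reg ((x j:ℝ)) ^ (-((1:ℝ)/6)) * reg (r j) ^ ((1:ℝ)/2))
      ≤ ∏ j, (reg ((x j:ℝ)) ^ ((1:ℝ)/3)
        * max 1 (reg (r j) ^ ((1:ℝ)/2) / reg ((x j:ℝ)) ^ ((1:ℝ)/2))) :=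
    Finset.prod_le_prod (fun j _ => (hc j).le) (fun j _ => phi2_ge (x j) (r j))
  calc (∏ j, reg ((x j:ℝ)) ^ ((1:ℝ)/3)
        * max 1 (reg (r j) ^ ((1:ℝ)/2) / reg ((x j:ℝ)) ^ ((1:ℝ)/2)))⁻¹
      ≤ (∏ j, (reg ((x j:ℝ)) ^ (-((1:ℝ)/6)) * reg (r j) ^ ((1:ℝ)/2)))⁻¹ :=
        inv_anti₀ (Finset.prod_pos fun j _ => hc j) hle
    _ = ∏ j, (reg ((x j:ℝ)) ^ (-((1:ℝ)/6)) * reg (r j) ^ ((1:ℝ)/2))⁻¹ :=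
        (Finset.prod_inv_distrib _).symm
    _ = ∏ j, (reg ((x j:ℝ)) ^ ((1:ℝ)/6) * (reg (r j) ^ ((1:ℝ)/2))⁻¹) := by
        apply Finset.prod_congr rfl
        intro j _
        rw [mul_inv, Real.rpow_neg (reg_pos _).le, inv_inv]

lemma card_LambdaSet (L d : ℕ) : (LambdaSet L d).card = L^d := by
  unfold LambdaSet
  rw [Fintype.card_piFinset]
  simp [card_Lambda1]

lemma continuous_reg : Continuous reg := by
  unfold reg
  have : Continuous (fun r : ℝ => 1 + r^2) := by continuity
  exact Real.continuous_sqrt.comp this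

end Helpers5
section Helpers6
open Real

/-- the simplified integrand -/
def F2fn (L d ξ : ℕ) (x : Fin d → ℤ) (s : ℝ) : ℝ :=
  dIntR L d (fun k => (∏ j, reg ((x j:ℝ)) ^ ((1:ℝ)/3)
    * max 1 (reg (|s| * ‖zfn ξ (k j)‖) ^ ((1:ℝ)/2) / reg ((x j:ℝ)) ^ ((1:ℝ)/2)))⁻¹)

lemma F2fn_continuous (L d ξ : ℕ) (x : Fin d → ℤ) : Continuous (F2fn L d ξ x) := by
  unfold F2fn dIntR
  apply Continuous.mul continuous_const
  apply continuous_finset_sum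
  intro m _
  apply Continuous.inv₀
  · apply continuous_finset_prod
    intro j _
    apply Continuous.mul continuous_const
    apply Continuous.max continuous_const
    apply Continuous.div_const
    apply Continuous.rpow_const
    · exact continuous_reg.comp (continuous_abs.mul continuous_const)
    · intro s; left; exact (reg_pos _).ne'
  · intro s
    apply ne_of_gt
    apply Finset.prod_pos
    intro j _
    exact mul_pos (Real.rpow_pos_of_pos (reg_pos _) _)
      (lt_of_lt_of_le one_pos (le_max_left _ _))

lemma F2fn_even (L d ξ : ℕ) (x : Fin d → ℤ) (s : ℝ) : F2fn L d ξ x (-s) = F2fn L d ξ x s := by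
  unfold F2fn
  simp [abs_neg]

lemma F2fn_le_P {L d ξ : ℕ} {x : Fin d → ℤ} (hL : 1 ≤ L) (s : ℝ) :
    F2fn L d ξ x s ≤ ∏ j, reg ((x j:ℝ)) ^ ((1:ℝ)/6) := by
  unfold F2fn dIntR
  have hP0 : (0:ℝ) ≤ ∏ j, reg ((x j:ℝ)) ^ ((1:ℝ)/6) :=
    Finset.prod_nonneg fun j _ => Real.rpow_nonneg (reg_pos _).le _
  have hterm : ∀ m ∈ LambdaSet L d,
      (∏ j, reg ((x j:ℝ)) ^ ((1:ℝ)/3)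
        * max 1 (reg (|s| * ‖zfn ξ ((dpt L m) j)‖) ^ ((1:ℝ)/2)
            / reg ((x j:ℝ)) ^ ((1:ℝ)/2)))⁻¹
      ≤ ∏ j, reg ((x j:ℝ)) ^ ((1:ℝ)/6) := by
    intro m _
    refine le_trans (inv_prod_le x (fun j => |s| * ‖zfn ξ ((dpt L m) j)‖)) ?_
    apply Finset.prod_le_prod
    · intro j _
      exact mul_nonneg (Real.rpow_nonneg (reg_pos _).le _)
        (inv_nonneg.mpr (Real.rpow_nonneg (reg_pos _).le _))
    · intro j _
      exact mul_le_of_le_one_right (Real.rpow_nonneg (reg_pos _).le _)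
        (inv_reg_rpow_le_one _)
  calc ((L:ℝ)^d)⁻¹ * ∑ m ∈ LambdaSet L d, (∏ j, reg ((x j:ℝ)) ^ ((1:ℝ)/3)
        * max 1 (reg (|s| * ‖zfn ξ ((dpt L m) j)‖) ^ ((1:ℝ)/2)
            / reg ((x j:ℝ)) ^ ((1:ℝ)/2)))⁻¹
      ≤ ((L:ℝ)^d)⁻¹ * ∑ m ∈ LambdaSet L d, ∏ j, reg ((x j:ℝ)) ^ ((1:ℝ)/6) := by
        apply mul_le_mul_of_nonneg_left (Finset.sum_le_sum hterm) (by positivity)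
    _ = ((L:ℝ)^d)⁻¹ * ((L^d : ℕ) * ∏ j, reg ((x j:ℝ)) ^ ((1:ℝ)/6)) := by
        rw [Finset.sum_const, card_LambdaSet, nsmul_eq_mul]
    _ = ∏ j, reg ((x j:ℝ)) ^ ((1:ℝ)/6) := by
        have hL0 : ((L:ℝ))^d ≠ 0 := by positivity
        rw [← mul_assoc]
        rw [show ((L^d : ℕ):ℝ) = (L:ℝ)^d by push_cast; ring]
        rw [inv_mul_cancel₀ hL0, one_mul]

lemma F2fn_le_decay {L d ξ : ℕ} {x : Fin d → ℤ} {b s : ℝ} (hL : 4 ≤ L)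
    (hb0 : 0 < b) (hb1 : b < 1) (hξ : ξ = 0 ∨ ξ = 1) (hs1 : 1 ≤ s) (hs2 : s ≤ (L:ℝ)/4) :
    F2fn L d ξ x s ≤ (∏ j, reg ((x j:ℝ)) ^ ((1:ℝ)/6))
      * ((2:ℝ)^((1-b)/2) * (1 + 2/(Real.pi*b)) * s^(-((1-b)/2)))^d := by
  have hs0 : (0:ℝ) < s := lt_of_lt_of_le one_pos hs1
  have habs : |s| = s := abs_of_pos hs0
  set P : ℝ := ∏ j, reg ((x j:ℝ)) ^ ((1:ℝ)/6) with hP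
  have hP0 : (0:ℝ) ≤ P := Finset.prod_nonneg fun j _ => Real.rpow_nonneg (reg_pos _).le _
  set q : ℤ → ℝ := fun m1 => (reg (s * ‖zfn ξ ((m1:ℝ)/(L:ℝ))‖) ^ ((1:ℝ)/2))⁻¹
    with hq
  have hq0 : ∀ m1, 0 ≤ q m1 := by
    intro m1; rw [hq]
    exact inv_nonneg.mpr (Real.rpow_nonneg (reg_pos _).le _)
  have hA0 : (0:ℝ) ≤ ((L:ℝ))⁻¹ * ∑ m1 ∈ Lambda1 L, q m1 := by
    apply mul_nonneg (by positivity)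
    exact Finset.sum_nonneg fun m1 _ => hq0 m1
  have step1 : F2fn L d ξ x s
      ≤ ((L:ℝ)^d)⁻¹ * ∑ m ∈ LambdaSet L d, ∏ j, (reg ((x j:ℝ)) ^ ((1:ℝ)/6) * q (m j)) := by
    unfold F2fn dIntR
    apply mul_le_mul_of_nonneg_left _ (by positivity)
    apply Finset.sum_le_sum
    intro m _
    have h := inv_prod_le x (fun j => |s| * ‖zfn ξ ((dpt L m) j)‖)
    refine le_trans h (le_of_eq ?_)
    apply Finset.prod_congr rfl
    intro j _
    rw [hq]
    dsimp only
    rw [habs]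
    rfl
  have step2 : ((L:ℝ)^d)⁻¹ * ∑ m ∈ LambdaSet L d, ∏ j, (reg ((x j:ℝ)) ^ ((1:ℝ)/6) * q (m j))
      = P * (((L:ℝ))⁻¹ * ∑ m1 ∈ Lambda1 L, q m1)^d := by
    have e1 : ∀ m : Fin d → ℤ, ∏ j, (reg ((x j:ℝ)) ^ ((1:ℝ)/6) * q (m j))
        = P * ∏ j, q (m j) := fun m => Finset.prod_mul_distrib
    simp only [e1]
    rw [← Finset.mul_sum]
    have e2 : ∑ m ∈ LambdaSet L d, ∏ j, q (m j) = (∑ m1 ∈ Lambda1 L, q m1)^d := by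
      unfold LambdaSet
      rw [← Finset.prod_univ_sum]
      rw [Finset.prod_const, Finset.card_univ, Fintype.card_fin]
    rw [e2, mul_pow, inv_pow]
    ring
  have step3 : ((L:ℝ))⁻¹ * ∑ m1 ∈ Lambda1 L, q m1
      ≤ (2:ℝ)^((1-b)/2) * (1 + 2/(Real.pi*b)) * s^(-((1-b)/2)) :=
    oneDim_bound hL hb0 hb1 ξ hξ hs1 hs2
  calc F2fn L d ξ x s
      ≤ ((L:ℝ)^d)⁻¹ * ∑ m ∈ LambdaSet L d, ∏ j, (reg ((x j:ℝ)) ^ ((1:ℝ)/6) * q (m j)) := step1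
    _ = P * (((L:ℝ))⁻¹ * ∑ m1 ∈ Lambda1 L, q m1)^d := step2
    _ ≤ P * ((2:ℝ)^((1-b)/2) * (1 + 2/(Real.pi*b)) * s^(-((1-b)/2)))^d :=
        mul_le_mul_of_nonneg_left (pow_le_pow_left₀ hA0 step3 d) hP0

end Helpers6
section Helpers7
open Real

lemma c6b_eq {d : ℕ} {b : ℝ} (hgt : 1 < (d:ℝ)*((1-b)/2)) :
    c6b d b = 2 + 2 * ((2:ℝ)^((1-b)/2) * (1 + 2/(Real.pi*b)))^d / ((d:ℝ)*((1-b)/2) - 1) := by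
  unfold c6b
  have hCd : ((2:ℝ)^((1-b)/2) * (1 + 2/(Real.pi*b)))^d
      = (2:ℝ)^((d:ℝ)*(1-b)/2) * (1 + 2/(Real.pi*b))^d := by
    rw [mul_pow]
    congr 1
    rw [← Real.rpow_natCast ((2:ℝ)^((1-b)/2)) d, ← Real.rpow_mul (by norm_num)]
    congr 1
    ring
  rw [hCd]
  have h1 : (2:ℝ)^((d:ℝ)*(1-b)/2 + 1) = 2 * (2:ℝ)^((d:ℝ)*(1-b)/2) := by
    rw [Real.rpow_add two_pos, Real.rpow_one]; ring
  rw [h1]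
  have hden : ((d:ℝ)*(1-b) - 2) ≠ 0 := by nlinarith
  have hden2 : ((d:ℝ)*((1-b)/2) - 1) ≠ 0 := by nlinarith
  field_simp

end Helpers7
set_option maxHeartbeats 2000000 in
theorem inverse_weight_integral
    (d L : ℕ) (hd : 3 ≤ d) (hL : 2 ≤ L) (β : ℝ) (hβ : 0 < β ∧ β < 1 - 2/(d:ℝ))
    (x : Fin d → ℤ) (hx : x ∈ LambdaSet L d) (ξ : ℕ) (hξ : ξ = 0 ∨ ξ = 1) :
    (∫ s in (-((L:ℝ)^β/4))..((L:ℝ)^β/4),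
      dIntR L d (fun k => (Phid L d β (RtildeS ξ s k) x)⁻¹)) ≤
      c6 d * ∏ j, reg (x j : ℝ) ^ ((1:ℝ)/6) := by
  obtain ⟨hβ0, hβ1⟩ := hβ
  have hd3 : (3:ℝ) ≤ (d:ℝ) := by exact_mod_cast hd
  have h2d : (0:ℝ) < 2/(d:ℝ) := by positivity
  have hβlt1 : β < 1 := by linarith
  have hL1n : 1 ≤ L := by omega
  have hL1 : (1:ℝ) ≤ (L:ℝ) := by exact_mod_cast hL1n
  have hLpow : (0:ℝ) < (L:ℝ)^β := Real.rpow_pos_of_pos (by linarith) _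
  set T : ℝ := (L:ℝ)^β/4 with hT
  have hT0 : 0 < T := by rw [hT]; linarith
  set P : ℝ := ∏ j, reg ((x j:ℝ)) ^ ((1:ℝ)/6) with hP
  have hP0 : 0 < P := Finset.prod_pos fun j _ => Real.rpow_pos_of_pos (reg_pos _) _
  have hP1 : 1 ≤ P := by
    rw [hP]
    calc (1:ℝ) = ∏ _j : Fin d, (1:ℝ) := by rw [Finset.prod_const_one]
      _ ≤ _ := Finset.prod_le_prod (fun j _ => zero_le_one)
          (fun j _ => one_le_reg_rpow _ (by norm_num))
  -- rewrite the integrand on the interval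
  have heq : Set.EqOn (fun s => dIntR L d (fun k => (Phid L d β (RtildeS ξ s k) x)⁻¹))
      (F2fn L d ξ x) (Set.uIcc (-T) T) := by
    intro s hs
    have hsT : |s| ≤ T := by
      rw [Set.uIcc_of_le (by linarith : -T ≤ T)] at hs
      exact abs_le.mpr ⟨hs.1, hs.2⟩
    show dIntR L d _ = F2fn L d ξ x s
    unfold F2fn dIntR
    have hterm : ∀ m ∈ LambdaSet L d,
        (Phid L d β (RtildeS ξ s (dpt L m)) x)⁻¹
          = (∏ j, reg ((x j:ℝ)) ^ ((1:ℝ)/3)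
            * max 1 (reg (|s| * ‖zfn ξ ((dpt L m) j)‖) ^ ((1:ℝ)/2)
                / reg ((x j:ℝ)) ^ ((1:ℝ)/2)))⁻¹ := by
      intro m _
      have hPhid : Phid L d β (RtildeS ξ s (dpt L m)) x
          = ∏ j, reg ((x j:ℝ)) ^ ((1:ℝ)/3)
            * max 1 (reg (|s| * ‖zfn ξ ((dpt L m) j)‖) ^ ((1:ℝ)/2)
                / reg ((x j:ℝ)) ^ ((1:ℝ)/2)) := by
        unfold Phid RtildeS
        apply Finset.prod_congr rfl
        intro j _
        apply Phi_eq_small (x j)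
          (mul_nonneg (abs_nonneg s) (norm_nonneg _))
        have hw := abs_zfn_le_two ξ ((dpt L m) j)
        have hw0 : 0 ≤ ‖zfn ξ ((dpt L m) j)‖ := norm_nonneg _
        have hs0 : 0 ≤ |s| := abs_nonneg s
        have hTs : |s| ≤ (L:ℝ)^β/4 := hsT
        nlinarith
      rw [hPhid]
    rw [Finset.sum_congr rfl hterm]
  rw [intervalIntegral.integral_congr heq]
  have hcont := F2fn_continuous L d ξ x
  have hintF : ∀ a b' : ℝ, IntervalIntegrable (F2fn L d ξ x) volume a b' := fun a b' =>
    hcont.intervalIntegrable _ _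
  -- key estimate for each admissible parameter b
  have key : ∀ b : ℝ, 0 < b → b < 1 - 2/(d:ℝ) →
      (∫ s in (-T)..T, F2fn L d ξ x s) ≤ c6b d b * P := by
    intro b hb0 hbd
    have hb1 : b < 1 := by linarith
    have hdα : 1 < (d:ℝ)*((1-b)/2) := by
      have h1 : 2/(d:ℝ) < 1 - b := by linarith
      have h2 : (d:ℝ) * (2/(d:ℝ)) = 2 := by field_simp
      nlinarith
    set C : ℝ := (2:ℝ)^((1-b)/2) * (1 + 2/(Real.pi*b)) with hC
    have hC0 : 0 < C := by
      rw [hC]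
      have := Real.pi_pos
      positivity
    -- symmetry
    have hsym : (∫ s in (-T)..(0:ℝ), F2fn L d ξ x s) = ∫ s in (0:ℝ)..T, F2fn L d ξ x s := by
      have hcn := intervalIntegral.integral_comp_neg (a := (0:ℝ)) (b := T)
        (f := F2fn L d ξ x)
      simp only [neg_zero] at hcn
      rw [← hcn]
      apply intervalIntegral.integral_congr
      intro s _
      exact F2fn_even L d ξ x s
    have hsplit : (∫ s in (-T)..T, F2fn L d ξ x s)
        = (∫ s in (-T)..(0:ℝ), F2fn L d ξ x s) + ∫ s in (0:ℝ)..T, F2fn L d ξ x s :=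
      (intervalIntegral.integral_add_adjacent_intervals (hintF _ _) (hintF _ _)).symm
    -- the half-line bound
    have hmain : (∫ s in (0:ℝ)..T, F2fn L d ξ x s)
        ≤ P * (1 + C^d / ((d:ℝ)*((1-b)/2) - 1)) := by
      have hfrac : 0 ≤ C^d / ((d:ℝ)*((1-b)/2) - 1) := by
        apply div_nonneg (by positivity)
        linarith
      rcases le_or_gt T 1 with hT1 | hT1
      · calc (∫ s in (0:ℝ)..T, F2fn L d ξ x s) ≤ ∫ s in (0:ℝ)..T, P :=
            intervalIntegral.integral_mono_on hT0.le (hintF _ _)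
              intervalIntegrable_const (fun s _ => F2fn_le_P hL1n s)
          _ = (T - 0) • P := intervalIntegral.integral_const P
          _ = T * P := by rw [smul_eq_mul]; ring
          _ ≤ P := by nlinarith
          _ ≤ P * (1 + C^d / ((d:ℝ)*((1-b)/2) - 1)) := by nlinarith
      · -- T > 1 : split at 1
        have hLbig : (L:ℝ)^β ≤ (L:ℝ) := by
          have h1 : (L:ℝ)^β ≤ (L:ℝ)^(1:ℝ) :=
            Real.rpow_le_rpow_of_exponent_le hL1 hβlt1.le
          rwa [Real.rpow_one] at h1
        have hL4 : (4:ℝ) ≤ (L:ℝ) := by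
          have : (4:ℝ) < (L:ℝ)^β := by
            have : (1:ℝ) < (L:ℝ)^β/4 := hT1
            linarith
          linarith
        have hL4' : 4 ≤ L := by exact_mod_cast hL4
        have hTL : T ≤ (L:ℝ)/4 := by rw [hT]; linarith
        have he : (∫ s in (0:ℝ)..T, F2fn L d ξ x s)
            = (∫ s in (0:ℝ)..(1:ℝ), F2fn L d ξ x s) + ∫ s in (1:ℝ)..T, F2fn L d ξ x s :=
          (intervalIntegral.integral_add_adjacent_intervals (hintF _ _) (hintF _ _)).symm
        have b1 : (∫ s in (0:ℝ)..(1:ℝ), F2fn L d ξ x s) ≤ P := by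
          calc (∫ s in (0:ℝ)..(1:ℝ), F2fn L d ξ x s) ≤ ∫ s in (0:ℝ)..(1:ℝ), P :=
              intervalIntegral.integral_mono_on zero_le_one (hintF _ _)
                intervalIntegrable_const (fun s _ => F2fn_le_P hL1n s)
            _ = ((1:ℝ) - 0) • P := intervalIntegral.integral_const P
            _ = P := by rw [smul_eq_mul]; ring
        have b2 : (∫ s in (1:ℝ)..T, F2fn L d ξ x s)
            ≤ P * C^d / ((d:ℝ)*((1-b)/2) - 1) := by
          have hmono : ∀ s ∈ Set.Icc (1:ℝ) T,
              F2fn L d ξ x s ≤ (P * C^d) * s^(-((d:ℝ)*((1-b)/2))) := by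
            intro s hs
            have hs0 : (0:ℝ) < s := lt_of_lt_of_le one_pos hs.1
            have h := F2fn_le_decay (d := d) (x := x) hL4' hb0 hb1 hξ hs.1 (hs.2.trans hTL)
            calc F2fn L d ξ x s ≤ P * (C * s^(-((1-b)/2)))^d := h
              _ = (P * C^d) * s^(-((d:ℝ)*((1-b)/2))) := by
                  rw [mul_pow]
                  rw [← Real.rpow_natCast (s^(-((1-b)/2))) d, ← Real.rpow_mul hs0.le]
                  rw [show -((1-b)/2) * (d:ℕ) = -((d:ℝ)*((1-b)/2)) by push_cast; ring]
                  ring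
          have hint2 : IntervalIntegrable (fun s => (P*C^d) * s^(-((d:ℝ)*((1-b)/2))))
              volume 1 T := by
            apply ContinuousOn.intervalIntegrable
            apply ContinuousOn.mul continuousOn_const
            apply ContinuousOn.rpow_const continuousOn_id
            intro s hs
            rw [Set.uIcc_of_le hT1.le] at hs
            left
            have : (0:ℝ) < s := lt_of_lt_of_le one_pos hs.1
            exact this.ne'
          have hrw : (∫ s in (1:ℝ)..T, (P*C^d) * s^(-((d:ℝ)*((1-b)/2))))
              = (P*C^d) * ((T^(1 - (d:ℝ)*((1-b)/2)) - 1)/(1 - (d:ℝ)*((1-b)/2))) := by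
            rw [intervalIntegral.integral_const_mul]
            congr 1
            rw [integral_rpow (Or.inr ⟨ne_of_lt (by linarith : -((d:ℝ)*((1-b)/2)) < -1),
              by
                rw [Set.uIcc_of_le hT1.le]
                intro hcon
                exact absurd hcon.1 (by norm_num)⟩)]
            rw [Real.one_rpow,
              show -((d:ℝ)*((1-b)/2)) + 1 = 1 - (d:ℝ)*((1-b)/2) by ring]
          calc (∫ s in (1:ℝ)..T, F2fn L d ξ x s)
              ≤ ∫ s in (1:ℝ)..T, (P*C^d) * s^(-((d:ℝ)*((1-b)/2))) :=
                intervalIntegral.integral_mono_on hT1.le (hintF _ _) hint2 hmono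
            _ = (P*C^d) * ((T^(1 - (d:ℝ)*((1-b)/2)) - 1)/(1 - (d:ℝ)*((1-b)/2))) := hrw
            _ ≤ P * C^d / ((d:ℝ)*((1-b)/2) - 1) := by
                have hTpow : 0 ≤ T^(1 - (d:ℝ)*((1-b)/2)) := Real.rpow_nonneg hT0.le _
                have hneg : 1 - (d:ℝ)*((1-b)/2) < 0 := by linarith
                have h1 : (T^(1 - (d:ℝ)*((1-b)/2)) - 1)/(1 - (d:ℝ)*((1-b)/2))
                    ≤ ((d:ℝ)*((1-b)/2) - 1)⁻¹ := by
                  rw [div_le_iff_of_neg hneg]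
                  have he2 : ((d:ℝ)*((1-b)/2) - 1)⁻¹ * (1 - (d:ℝ)*((1-b)/2)) = -1 := by
                    have hne : ((d:ℝ)*((1-b)/2) - 1) ≠ 0 := by linarith
                    rw [show (1 - (d:ℝ)*((1-b)/2)) = -((d:ℝ)*((1-b)/2) - 1) by ring,
                      mul_neg, inv_mul_cancel₀ hne]
                  rw [he2]
                  linarith
                calc (P*C^d) * ((T^(1 - (d:ℝ)*((1-b)/2)) - 1)/(1 - (d:ℝ)*((1-b)/2)))
                    ≤ (P*C^d) * ((d:ℝ)*((1-b)/2) - 1)⁻¹ :=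
                      mul_le_mul_of_nonneg_left h1 (by positivity)
                  _ = P * C^d / ((d:ℝ)*((1-b)/2) - 1) := by
                      rw [div_eq_mul_inv]
                      ring
        calc (∫ s in (0:ℝ)..T, F2fn L d ξ x s)
            = (∫ s in (0:ℝ)..(1:ℝ), F2fn L d ξ x s) + ∫ s in (1:ℝ)..T, F2fn L d ξ x s := he
          _ ≤ P + P * C^d / ((d:ℝ)*((1-b)/2) - 1) := add_le_add b1 b2
          _ = P * (1 + C^d / ((d:ℝ)*((1-b)/2) - 1)) := by ring
    calc (∫ s in (-T)..T, F2fn L d ξ x s)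
        = (∫ s in (-T)..(0:ℝ), F2fn L d ξ x s) + ∫ s in (0:ℝ)..T, F2fn L d ξ x s := hsplit
      _ = 2 * ∫ s in (0:ℝ)..T, F2fn L d ξ x s := by rw [hsym]; ring
      _ ≤ 2 * (P * (1 + C^d / ((d:ℝ)*((1-b)/2) - 1))) := by linarith [hmain]
      _ = c6b d b * P := by rw [c6b_eq hdα, hC]; ring
  -- conclude via the infimum
  have hbex : 0 < (1 - 2/(d:ℝ))/2 ∧ (1 - 2/(d:ℝ))/2 < 1 - 2/(d:ℝ) := by
    constructor <;> [nlinarith; nlinarith]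
  have hSne : {v : ℝ | ∃ b : ℝ, 0 < b ∧ b < 1 - 2/(d:ℝ) ∧ v = c6b d b}.Nonempty :=
    ⟨c6b d ((1 - 2/(d:ℝ))/2), (1 - 2/(d:ℝ))/2, hbex.1, hbex.2, rfl⟩
  have hlow : ∀ v ∈ {v : ℝ | ∃ b : ℝ, 0 < b ∧ b < 1 - 2/(d:ℝ) ∧ v = c6b d b},
      (∫ s in (-T)..T, F2fn L d ξ x s) / P ≤ v := by
    rintro v ⟨b, hb0, hb1, rfl⟩
    rw [div_le_iff₀ hP0]
    exact key b hb0 hb1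
  have hfin := le_csInf hSne hlow
  rw [div_le_iff₀ hP0] at hfin
  exact hfin

end KWP
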